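/- Let R be a commutative ring equipped with a ℤ-grading, and let C be a bounded chain complex of graded free R-modules of finite total rank whose differential is homogeneous of degree 0. If the image in R of the ungraded Euler characteristic χ(C) = Σ_i (−1)^i rk(C_i) is a unit of R, then the complex C ⊗_R C* admits a direct summand (as a graded chain complex) isomorphic to t^0 q^0 R, that is, to R concentrated in homological degree 0 with grading shift 0. -/

import Mathlib

noncomputable section

/-!
Framework for STATEMENT 8: finite based graded chain complexes of graded free modules over a
`ℤ`-graded commutative ring `R` (with grading `𝒜 : ℤ → AddSubgroup R`, `[GradedRing 𝒜]`).
A complex is described by the finite homogeneous basis `ι` of the total complex, the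
homological degree `tdeg` and grading shift `qdeg` of each basis element, and the matrix of
the differential.  A matrix entry describing a map `q^a R → q^b R` which is multiplication
by a homogeneous element `r ∈ 𝒜 e` is homogeneous of degree `b - a + e`.
-/

/-- The sign `(-1)^n` for an integer `n`. -/
def pm (n : ℤ) : ℤ := if Even n then 1 else -1

/-- The data of a finite based graded chain complex over a graded ring `R`. -/
structure GRC (R : Type) [CommRing R] where
  /-- basis elements (of all homological degrees together) -/
  ι : Type
  [fin : Fintype ι]
  [dec : DecidableEq ι]
  /-- homological degree of each basis element -/
  tdeg : ι → ℤ
  /-- grading shift of each basis element -/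
  qdeg : ι → ℤ
  /-- the matrix of the differential: `d b a` is the coefficient of `b` in `d(a)` -/
  d : Matrix ι ι R

attribute [instance] GRC.fin GRC.dec

namespace GRC

variable {R : Type} [CommRing R]

/-- A bounded chain complex of graded free modules of finite total rank whose differential is
homogeneous of degree `0` (i.e. the entry from a generator of shift `qdeg a` to one of shift
`qdeg b` is a homogeneous ring element of degree `qdeg a - qdeg b`), raises homological degree
by one, and squares to zero. -/
def IsAdm (𝒜 : ℤ → AddSubgroup R) (K : GRC R) : Prop :=
  (∀ a b, K.d b a ∈ 𝒜 (K.qdeg a - K.qdeg b)) ∧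
  (∀ a b, K.d b a ≠ 0 → K.tdeg b = K.tdeg a + 1) ∧
  K.d * K.d = 0

/-- Tensor product of complexes over `R`, with the Koszul sign convention. -/
def tensor (K K' : GRC R) : GRC R where
  ι := K.ι × K'.ι
  tdeg p := K.tdeg p.1 + K'.tdeg p.2
  qdeg p := K.qdeg p.1 + K'.qdeg p.2
  d p q := (if p.2 = q.2 then K.d p.1 q.1 else 0) +
    (if p.1 = q.1 then pm (K.tdeg q.1) • K'.d p.2 q.2 else 0)

/-- The dual complex: degrees are negated, the differential is transposed. -/
def dual (K : GRC R) : GRC R where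
  ι := K.ι
  tdeg a := -K.tdeg a
  qdeg a := -K.qdeg a
  d := K.d.transpose

/-- The complex `t^0 q^0 R` with a single basis element. -/
def one (R : Type) [CommRing R] : GRC R where
  ι := PUnit
  tdeg _ := 0
  qdeg _ := 0
  d := 0

/-- A chain map `A → B` homogeneous of degree `t` (and homological degree `0`), given by a
matrix: each entry is a homogeneous ring element of the appropriate degree, entries connect
generators of equal homological degree, and the matrix commutes with the differentials. -/
def IsCM (𝒜 : ℤ → AddSubgroup R) (A B : GRC R) (t : ℤ) (f : Matrix B.ι A.ι R) : Prop :=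
  (∀ a b, f b a ∈ 𝒜 (A.qdeg a - B.qdeg b + t)) ∧
  (∀ a b, f b a ≠ 0 → B.tdeg b = A.tdeg a) ∧
  B.d * f = f * A.d

end GRC


section Aux

lemma pm_sq (n : ℤ) : pm n * pm n = 1 := by
  unfold pm; split_ifs <;> norm_num

lemma pm_succ (n : ℤ) : pm (n + 1) = - pm n := by
  unfold pm
  by_cases h : Even n <;> simp [h, Int.even_add_one]

/-- auxiliary sign `(-1)^{binom t 2}`, via residues mod 4. -/
def Ssgn (t : ℤ) : ℤ := if t % 4 = 0 ∨ t % 4 = 1 then 1 else -1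

lemma Ssgn_succ (t : ℤ) : Ssgn (t + 1) = pm t * Ssgn t := by
  unfold Ssgn pm
  simp only [Int.even_iff]
  split_ifs <;> first | (exfalso; omega) | norm_num

lemma Ssgn_sq (t : ℤ) : Ssgn t * Ssgn t = 1 := by
  unfold Ssgn; split_ifs <;> norm_num

lemma keyA (t : ℤ) : Ssgn t + pm (t + 1) * Ssgn (t + 1) = 0 := by
  rw [Ssgn_succ, pm_succ]
  linear_combination (-Ssgn t) * pm_sq t

lemma keyB (t : ℤ) : Ssgn (t + 1 + 1) + pm t * Ssgn (t + 1) = 0 := by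
  rw [Ssgn_succ (t+1), pm_succ]
  ring

lemma keyC (t : ℤ) : Ssgn (t + 1) * Ssgn t = pm t := by
  rw [Ssgn_succ]
  linear_combination (pm t) * Ssgn_sq t

lemma intCast_mem_zero {R : Type} [CommRing R] (𝒜 : ℤ → AddSubgroup R) [GradedRing 𝒜]
    (n : ℤ) : ((n : R)) ∈ 𝒜 0 := by
  have h1 : (1 : R) ∈ 𝒜 0 := SetLike.GradedOne.one_mem
  have := AddSubgroup.zsmul_mem (𝒜 0) h1 n
  simpa using this

lemma inv_mem_zero {R : Type} [CommRing R] (𝒜 : ℤ → AddSubgroup R) [GradedRing 𝒜]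
    {u : R} (hu0 : u ∈ 𝒜 0) (hu : IsUnit u) : (↑hu.unit⁻¹ : R) ∈ 𝒜 0 := by
  set v : R := ↑hu.unit⁻¹ with hv
  have h1 : u * v = 1 := by
    rw [hv]; exact hu.mul_val_inv
  set v0 : R := (DirectSum.decompose 𝒜 v 0 : R) with hv0
  have h2 : u * v0 = 1 := by
    have h3 : (DirectSum.decompose 𝒜 (u * v) ((0 : ℤ) + 0) : R)
        = u * (DirectSum.decompose 𝒜 v 0 : R) :=
      DirectSum.coe_decompose_mul_add_of_left_mem 𝒜 hu0
    rw [h1] at h3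
    rw [show ((0:ℤ) + 0) = 0 by ring] at h3
    rw [DirectSum.decompose_of_mem_same 𝒜 (SetLike.GradedOne.one_mem)] at h3
    rw [hv0, ← h3]
  have h4 : v = v0 := by
    have : v * (u * v0) = v * 1 := by rw [h2]
    calc v = v * (u * v0) := by rw [h2, mul_one]
    _ = (v * u) * v0 := by ring
    _ = v0 := by rw [mul_comm v u, h1, one_mul]
  rw [h4]
  exact SetLike.coe_mem _

end Aux

/-- if the ungraded Euler characteristic of `C` is a unit of the `ℤ`-graded
commutative ring `R`, then `C ⊗_R C*` admits `t^0 q^0 R` as a direct summand of graded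
chain complexes, i.e. (by the splitting lemma) there are homogeneous chain maps of degree `0`
`f : t^0 q^0 R → C ⊗_R C*` and `g : C ⊗_R C* → t^0 q^0 R` with `g ∘ f = id`. -/
theorem statement8 (R : Type) [CommRing R] (𝒜 : ℤ → AddSubgroup R) [GradedRing 𝒜]
    (K : GRC R) (hK : K.IsAdm 𝒜)
    (hchi : IsUnit (((∑ x : K.ι, pm (K.tdeg x)) : ℤ) : R)) :
    ∃ (f : Matrix (K.tensor K.dual).ι (GRC.one R).ι R)
      (g : Matrix (GRC.one R).ι (K.tensor K.dual).ι R),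
      GRC.IsCM 𝒜 (GRC.one R) (K.tensor K.dual) 0 f ∧
      GRC.IsCM 𝒜 (K.tensor K.dual) (GRC.one R) 0 g ∧
      g * f = 1 := by
  classical
  obtain ⟨hq, ht, hdd⟩ := hK
  set v : R := ↑hchi.unit⁻¹ with hv
  have hvmem : v ∈ 𝒜 0 := inv_mem_zero 𝒜 (intCast_mem_zero 𝒜 _) hchi
  refine ⟨fun p _ => if p.1 = p.2 then v * ((Ssgn (K.tdeg p.1) : ℤ) : R) else 0,
          fun _ p => if p.1 = p.2 then ((Ssgn (K.tdeg p.1 + 1) : ℤ) : R) else 0,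
          ⟨?_, ?_, ?_⟩, ⟨?_, ?_, ?_⟩, ?_⟩
  · -- grading of f
    intro a b
    show (if b.1 = b.2 then v * ((Ssgn (K.tdeg b.1) : ℤ) : R) else 0) ∈ _
    by_cases h : b.1 = b.2
    · rw [if_pos h]
      have hdeg : (GRC.one R).qdeg a - (K.tensor K.dual).qdeg b + 0 = 0 := by
        simp [GRC.one, GRC.tensor, GRC.dual, h]
      rw [hdeg]
      have : v * ((Ssgn (K.tdeg b.1) : ℤ) : R) = (Ssgn (K.tdeg b.1)) • v := by
        rw [zsmul_eq_mul, mul_comm]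
      rw [this]
      exact AddSubgroup.zsmul_mem _ hvmem _
    · rw [if_neg h]; exact (𝒜 _).zero_mem
  · -- tdeg of f
    intro a b hne
    have hne' : (if b.1 = b.2 then v * ((Ssgn (K.tdeg b.1) : ℤ) : R) else 0) ≠ 0 := hne
    by_cases h : b.1 = b.2
    · simp [GRC.one, GRC.tensor, GRC.dual, h]
    · simp [h] at hne' 
  · -- f chain map
    have key : ∀ p : K.ι × K.ι, (∑ j : K.ι × K.ι, (K.tensor K.dual).d p j *
        (if j.1 = j.2 then v * ((Ssgn (K.tdeg j.1) : ℤ) : R) else 0)) = 0 := ?_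
    case _ =>
      ext p a
      erw [Matrix.mul_apply, Matrix.mul_apply]
      have hone : ∀ j, (GRC.one R).d j a = 0 := fun j => rfl
      simp only [hone, mul_zero, Finset.sum_const_zero]
      exact Eq.trans (Finset.sum_congr rfl fun j _ => by congr) (key p)
    intro p
    rw [Fintype.sum_prod_type]
    simp only [mul_ite, mul_zero, Finset.sum_ite_eq, Finset.mem_univ, if_true]
    have hTd : ∀ j1 : K.ι, (K.tensor K.dual).d p (j1, j1)
        = (if p.2 = j1 then K.d p.1 j1 else 0)
          + (if p.1 = j1 then pm (K.tdeg j1) • K.d j1 p.2 else 0) := fun j1 => rfl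
    erw [Finset.sum_congr rfl (fun j1 _ => congrArg (· * _) (hTd j1))]
    simp only [add_mul, ite_mul, zero_mul, Finset.sum_add_distrib,
      Finset.sum_ite_eq, Finset.mem_univ, if_true]
    by_cases hd : K.d p.1 p.2 = 0
    · simp [hd]
    · have hT := ht p.2 p.1 hd
      rw [hT, zsmul_eq_mul]
      have hcast : ((Ssgn (K.tdeg p.2) : ℤ) : R)
          + ((pm (K.tdeg p.2 + 1) : ℤ) : R) * ((Ssgn (K.tdeg p.2 + 1) : ℤ) : R) = 0 := by
        exact_mod_cast congrArg (fun n : ℤ => (n : R)) (keyA (K.tdeg p.2))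
      linear_combination (K.d p.1 p.2 * v) * hcast
  · -- grading of g
    intro a b
    show (if a.1 = a.2 then ((Ssgn (K.tdeg a.1 + 1) : ℤ) : R) else 0) ∈ _
    by_cases h : a.1 = a.2
    · rw [if_pos h]
      have hdeg : (K.tensor K.dual).qdeg a - (GRC.one R).qdeg b + 0 = 0 := by
        simp [GRC.one, GRC.tensor, GRC.dual, h]
      rw [hdeg]
      exact intCast_mem_zero 𝒜 _
    · rw [if_neg h]; exact (𝒜 _).zero_mem
  · -- tdeg of g
    intro a b hne
    have hne' : (if a.1 = a.2 then ((Ssgn (K.tdeg a.1 + 1) : ℤ) : R) else 0) ≠ 0 := hne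
    by_cases h : a.1 = a.2
    · simp [GRC.one, GRC.tensor, GRC.dual, h]
    · simp [h] at hne' 
  · -- g chain map
    have key : ∀ q : K.ι × K.ι, 0 = ∑ j : K.ι × K.ι,
        (if j.1 = j.2 then ((Ssgn (K.tdeg j.1 + 1) : ℤ) : R) else 0) * (K.tensor K.dual).d j q := ?_
    case _ =>
      ext a q
      erw [Matrix.mul_apply, Matrix.mul_apply]
      have hone : ∀ j, (GRC.one R).d a j = 0 := fun j => rfl
      simp only [hone, zero_mul, Finset.sum_const_zero]
      exact Eq.trans (key q) (Finset.sum_congr rfl fun j _ => by congr)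
    intro q
    rw [Fintype.sum_prod_type]
    simp only [ite_mul, zero_mul, Finset.sum_ite_eq, Finset.mem_univ, if_true]
    have hTd : ∀ j1 : K.ι, (K.tensor K.dual).d (j1, j1) q
        = (if j1 = q.2 then K.d j1 q.1 else 0)
          + (if j1 = q.1 then pm (K.tdeg q.1) • K.d q.2 j1 else 0) := fun j1 => rfl
    erw [Finset.sum_congr rfl (fun j1 _ => congrArg (_ * ·) (hTd j1))]
    simp only [mul_add, mul_ite, mul_zero, Finset.sum_add_distrib,
      Finset.sum_ite_eq', Finset.mem_univ, if_true]
    by_cases hd : K.d q.2 q.1 = 0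
    · simp [hd]
    · have hT := ht q.1 q.2 hd
      rw [hT, zsmul_eq_mul]
      have hcast : ((Ssgn (K.tdeg q.1 + 1 + 1) : ℤ) : R)
          + ((pm (K.tdeg q.1) : ℤ) : R) * ((Ssgn (K.tdeg q.1 + 1) : ℤ) : R) = 0 := by
        exact_mod_cast congrArg (fun n : ℤ => (n : R)) (keyB (K.tdeg q.1))
      linear_combination (-(K.d q.2 q.1)) * hcast
  · -- g * f = 1
    have key : (∑ j : K.ι × K.ι, (if j.1 = j.2 then ((Ssgn (K.tdeg j.1 + 1) : ℤ) : R) else 0) *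
        (if j.1 = j.2 then v * ((Ssgn (K.tdeg j.1) : ℤ) : R) else 0)) = 1 := ?_
    case _ =>
      ext a b
      erw [Matrix.mul_apply]
      have hab : a = b := @Subsingleton.elim PUnit _ a b
      rw [hab, Matrix.one_apply_eq]
      exact Eq.trans (Finset.sum_congr rfl fun j _ => by congr) key
    rw [Fintype.sum_prod_type]
    simp only [ite_mul, zero_mul, mul_ite, mul_zero, Finset.sum_ite_eq, Finset.mem_univ, if_true]
    have hterm : ∀ j1 : K.ι, ((Ssgn (K.tdeg j1 + 1) : ℤ) : R) * (v * ((Ssgn (K.tdeg j1) : ℤ) : R))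
        = v * ((pm (K.tdeg j1) : ℤ) : R) := by
      intro j1
      have hcast : ((Ssgn (K.tdeg j1 + 1) : ℤ) : R) * ((Ssgn (K.tdeg j1) : ℤ) : R)
          = ((pm (K.tdeg j1) : ℤ) : R) := by
        exact_mod_cast congrArg (fun n : ℤ => (n : R)) (keyC (K.tdeg j1))
      linear_combination v * hcast
    rw [Finset.sum_congr rfl (fun j1 _ => hterm j1), ← Finset.mul_sum]
    have hsum : (∑ j1 : K.ι, ((pm (K.tdeg j1) : ℤ) : R))
        = (((∑ x : K.ι, pm (K.tdeg x)) : ℤ) : R) := by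
      push_cast
      rfl
    rw [hsum]
    have hu : v * (((∑ x : K.ι, pm (K.tdeg x)) : ℤ) : R) = 1 := by
      exact hchi.val_inv_mul
    rw [hu]

end
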